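/- Consider the SIS model under multi-layer Markovian mobility, with F* = F(v), L* = L(v), and assume δ_i > 0 for at least one patch i. Set A = (L* + D)^{-1} B and M = I − F*. Then for every p ∈ [0,1]^{nm} with P = diag(p), the matrix A^{-1} + P + (I − P)M is invertible and the identity I − diag((I − M)(A^{-1} + P + (I − P)M)^{-1} p) = diag(F* (A^{-1} + P + (I − P)M)^{-1} A^{-1} 1) holds, where 1 is the all-ones vector; moreover, all diagonal entries of this diagonal matrix are nonnegative. -/

import Mathlib

open Matrix Finset Filter

namespace SISMobility

/-- Index type for (class, patch) pairs: `(α, i)` with `α ∈ {1,…,m}` a class and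
`i ∈ {1,…,n}` a patch. -/
abbrev Idx (n m : ℕ) := Fin m × Fin n

/-- A CTMC generator matrix: nonnegative off-diagonal entries and zero row sums
(so that the diagonal entry is minus the total outgoing rate). -/
def IsGenerator {n : ℕ} (Q : Matrix (Fin n) (Fin n) ℝ) : Prop :=
  (∀ i j, i ≠ j → 0 ≤ Q i j) ∧ ∀ i, ∑ j, Q i j = 0

/-- Strong connectivity of the digraph on `{1,…,n}` with an edge `(i,j)` whenever
`i ≠ j` and `Q i j > 0`. -/
def StronglyConnected {n : ℕ} (Q : Matrix (Fin n) (Fin n) ℝ) : Prop :=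
  ∀ i j : Fin n, Relation.ReflTransGen (fun a b => a ≠ b ∧ 0 < Q a b) i j

/-- The `nm × nm` block-diagonal infection-rate matrix `B` (m copies of `diag β`). -/
noncomputable def Bmat (n m : ℕ) (β : Fin n → ℝ) : Matrix (Idx n m) (Idx n m) ℝ :=
  Matrix.diagonal fun k => β k.2

/-- The `nm × nm` block-diagonal recovery-rate matrix `D` (m copies of `diag δ`). -/
noncomputable def Dmat (n m : ℕ) (δ : Fin n → ℝ) : Matrix (Idx n m) (Idx n m) ℝ :=
  Matrix.diagonal fun k => δ k.2

/-- The block-diagonal mobility matrix `L(x)`: the `α`-block has entries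
`l^α_{ii} = ∑_{j≠i} q^α_{ji} x^α_j / x^α_i` and `l^α_{ij} = -q^α_{ji} x^α_j / x^α_i`. -/
noncomputable def Lmat {n m : ℕ} (Q : Fin m → Matrix (Fin n) (Fin n) ℝ)
    (x : Idx n m → ℝ) : Matrix (Idx n m) (Idx n m) ℝ :=
  fun k l =>
    if k.1 = l.1 then
      if k.2 = l.2 then ∑ j ∈ Finset.univ.filter (· ≠ k.2), Q k.1 j k.2 * x (k.1, j) / x k
      else -(Q k.1 l.2 k.2 * x (k.1, l.2) / x k)
    else 0

/-- The population-fraction matrix `F(x)`: entry `((α,i),(γ,j))` equals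
`x^γ_i / ∑_η x^η_i` if `j = i` and `0` otherwise. -/
noncomputable def Fmat {n m : ℕ} (x : Idx n m → ℝ) : Matrix (Idx n m) (Idx n m) ℝ :=
  fun k l => if l.2 = k.2 then x (l.1, k.2) / ∑ η : Fin m, x (η, k.2) else 0

/-- Right-hand side of the infection dynamics
`ṗ = (B F(x) − D − L(x)) p − diag(p) B F(x) p`. -/
noncomputable def pRHS {n m : ℕ} (β δ : Fin n → ℝ) (Q : Fin m → Matrix (Fin n) (Fin n) ℝ)
    (x p : Idx n m → ℝ) : Idx n m → ℝ :=
  (Bmat n m β * Fmat x - Dmat n m δ - Lmat Q x).mulVec p -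
    (Matrix.diagonal p * (Bmat n m β * Fmat x)).mulVec p

/-- Right-hand side of the mobility dynamics `ẋ^α = (Q^α)ᵀ x^α`. -/
noncomputable def xRHS {n m : ℕ} (Q : Fin m → Matrix (Fin n) (Fin n) ℝ)
    (x : Idx n m → ℝ) : Idx n m → ℝ :=
  fun k => ∑ j, Q k.1 j k.2 * x (k.1, j)

/-- `(p, x)` is a solution of the SIS model under multi-layer Markovian mobility. -/
def IsSolution {n m : ℕ} (β δ : Fin n → ℝ) (Q : Fin m → Matrix (Fin n) (Fin n) ℝ)
    (p x : ℝ → Idx n m → ℝ) : Prop :=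
  ∀ t : ℝ, 0 ≤ t → ∀ k : Idx n m,
    HasDerivAt (fun s => p s k) (pRHS β δ Q (x t) (p t) k) t ∧
    HasDerivAt (fun s => x s k) (xRHS Q (x t) k) t

/-- The radial abscissa `μ(G)`: the largest real part of a (complex) eigenvalue of a
real matrix `G`. -/
noncomputable def muMax {ι : Type*} [Fintype ι] [DecidableEq ι] (G : Matrix ι ι ℝ) : ℝ :=
  sSup (Complex.re '' spectrum ℂ (G.map (algebraMap ℝ ℂ)))

/-- The spectral radius `ρ(G)` of a real matrix `G`. -/
noncomputable def specRad {ι : Type*} [Fintype ι] [DecidableEq ι] (G : Matrix ι ι ℝ) : ℝ :=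
  sSup ((fun z : ℂ => ‖z‖) '' spectrum ℂ (G.map (algebraMap ℝ ℂ)))

/-- The fixed-point map `H(p) = (I + A(diag p + (I − diag p) M))⁻¹ A p`. -/
noncomputable def Hfun {n m : ℕ} (A M : Matrix (Idx n m) (Idx n m) ℝ)
    (p : Idx n m → ℝ) : Idx n m → ℝ :=
  ((1 + A * (Matrix.diagonal p + (1 - Matrix.diagonal p) * M))⁻¹).mulVec (A.mulVec p)


section AuxLemmas

open Relation

/-- Minimum principle for weakly diagonally dominant Z-matrices with reachability
to a strictly dominant row: `Kx ≥ 0` implies `x ≥ 0`. -/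
lemma zmat_key {ι : Type*} [Fintype ι] [DecidableEq ι] [Nonempty ι]
    (K : Matrix ι ι ℝ)
    (hZ : ∀ i l, i ≠ l → K i l ≤ 0)
    (hRS : ∀ i, 0 ≤ ∑ l, K i l)
    (hreach : ∀ i, ∃ j, Relation.ReflTransGen (fun a b : ι => a ≠ b ∧ K a b < 0) i j
        ∧ 0 < ∑ l, K j l)
    (x : ι → ℝ) (hy : ∀ i, 0 ≤ K.mulVec x i) : ∀ i, 0 ≤ x i := by
  by_contra h
  push_neg at h
  obtain ⟨i₀, hi₀⟩ := h
  obtain ⟨i, -, hmin⟩ := Finset.exists_min_image Finset.univ x ⟨i₀, Finset.mem_univ _⟩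
  have hmin : ∀ l, x i ≤ x l := fun l => hmin l (Finset.mem_univ _)
  have hxi : x i < 0 := lt_of_le_of_lt (hmin i₀) hi₀
  have hstep : ∀ j, x j = x i →
      (¬ 0 < ∑ l, K j l) ∧ ∀ l, K j l < 0 → x l = x i := by
    intro j hj
    have h1 : ∀ l ∈ Finset.univ, K j l * x l ≤ K j l * x i := by
      intro l _
      by_cases hl : j = l
      · subst hl; rw [hj]
      · exact mul_le_mul_of_nonpos_left (hmin l) (hZ j l hl)
    have h2 : (0:ℝ) ≤ ∑ l, K j l * x l := hy j
    have h3 : ∑ l, K j l * x l ≤ (∑ l, K j l) * x i := by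
      rw [Finset.sum_mul]
      exact Finset.sum_le_sum h1
    have h4 : (∑ l, K j l) * x i ≤ 0 := mul_nonpos_of_nonneg_of_nonpos (hRS j) hxi.le
    constructor
    · intro hpos
      have : (∑ l, K j l) * x i < 0 := mul_neg_of_pos_of_neg hpos hxi
      linarith
    · intro l hKl
      have heq : ∑ l, K j l * x l = ∑ l, K j l * x i := by
        rw [← Finset.sum_mul] at *
        linarith
      have := (Finset.sum_eq_sum_iff_of_le h1).mp heq l (Finset.mem_univ _)
      exact mul_left_cancel₀ (ne_of_lt hKl) this
  obtain ⟨j, hpath, hpos⟩ := hreach i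
  have hxj : x j = x i := by
    clear hpos
    induction hpath with
    | refl => rfl
    | tail hab hbc ih => exact (hstep _ ih).2 _ hbc.2
  exact (hstep j hxj).1 hpos

lemma Fmat_rowsum_aux {n m : ℕ} (x : Idx n m → ℝ) (hx : ∀ k, 0 < x k)
    (k : Idx n m) : ∑ l, Fmat x k l = 1 := by
  have : Nonempty (Fin m) := ⟨k.1⟩
  have hS : 0 < ∑ η : Fin m, x (η, k.2) :=
    Finset.sum_pos (fun η _ => hx _) Finset.univ_nonempty
  rw [Fintype.sum_prod_type]
  have h1 : ∀ γ : Fin m, ∑ j : Fin n, Fmat x k (γ, j)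
      = x (γ, k.2) / ∑ η : Fin m, x (η, k.2) := by
    intro γ
    simp [Fmat]
  rw [Finset.sum_congr rfl (fun γ _ => h1 γ), ← Finset.sum_div,
    div_self (ne_of_gt hS)]

lemma Lmat_rowsum_aux {n m : ℕ} (Q : Fin m → Matrix (Fin n) (Fin n) ℝ)
    (x : Idx n m → ℝ) (k : Idx n m) : ∑ l, Lmat Q x k l = 0 := by
  rw [Fintype.sum_prod_type]
  rw [Finset.sum_eq_single k.1]
  · have h1 : ∀ b, Lmat Q x k (k.1, b) =
        if k.2 = b then ∑ j ∈ Finset.univ.erase k.2, Q k.1 j k.2 * x (k.1, j) / x k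
        else -(Q k.1 b k.2 * x (k.1, b) / x k) := by
      intro b
      simp [Lmat, Finset.filter_ne']
    rw [Finset.sum_congr rfl (fun b _ => h1 b),
      ← Finset.add_sum_erase _ _ (Finset.mem_univ k.2)]
    rw [Finset.sum_congr rfl (fun b hb => if_neg (Finset.ne_of_mem_erase hb).symm)]
    simp [div_eq_mul_inv]
  · intro a _ ha
    apply Finset.sum_eq_zero
    intro b _
    simp [Lmat, ha.symm]
  · intro h; exact absurd (Finset.mem_univ _) h

end AuxLemmas

end SISMobility

open SISMobility

/-- with `A = (L* + D)⁻¹ B` and `M = I − F*`, for every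
`p ∈ [0,1]^{nm}` (with `P = diag p`) the matrix `A⁻¹ + P + (I − P)M` is invertible,
the identity
`I − diag((I − M)(A⁻¹ + P + (I − P)M)⁻¹ p) = diag(F*(A⁻¹ + P + (I − P)M)⁻¹ A⁻¹ 1)`
holds, and all diagonal entries of this diagonal matrix are nonnegative. -/
theorem diag_identity_nonneg
    (n m : ℕ) (hn : 2 ≤ n) (hm : 1 ≤ m)
    (Q : Fin m → Matrix (Fin n) (Fin n) ℝ)
    (hQgen : ∀ α, IsGenerator (Q α)) (hQirr : ∀ α, StronglyConnected (Q α))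
    (β δ : Fin n → ℝ) (hβ : ∀ i, 0 < β i) (hδ : ∀ i, 0 ≤ δ i)
    (hδpos : ∃ i, 0 < δ i)
    (vα : Fin m → Fin n → ℝ) (hvαpos : ∀ α i, 0 < vα α i)
    (hvαnorm : ∀ α, ∑ i, vα α i = 1)
    (hvαeig : ∀ α i, ∑ j, Q α j i * vα α j = 0)
    (Npop : Fin m → ℝ) (hNpop : ∀ α, 0 < Npop α)
    (v : Idx n m → ℝ) (hv : ∀ k, v k = Npop k.1 * vα k.1 k.2)
    (A M : Matrix (Idx n m) (Idx n m) ℝ)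
    (hA : A = (Lmat Q v + Dmat n m δ)⁻¹ * Bmat n m β)
    (hM : M = 1 - Fmat v) :
    ∀ p : Idx n m → ℝ, (∀ k, p k ∈ Set.Icc (0 : ℝ) 1) →
      IsUnit (A⁻¹ + Matrix.diagonal p + (1 - Matrix.diagonal p) * M).det ∧
      (1 : Matrix (Idx n m) (Idx n m) ℝ) -
          Matrix.diagonal (((1 - M) *
            (A⁻¹ + Matrix.diagonal p + (1 - Matrix.diagonal p) * M)⁻¹).mulVec p)
        = Matrix.diagonal ((Fmat v *
            (A⁻¹ + Matrix.diagonal p + (1 - Matrix.diagonal p) * M)⁻¹ *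
              A⁻¹).mulVec (1 : Idx n m → ℝ)) ∧
      ∀ k, 0 ≤ ((Fmat v *
          (A⁻¹ + Matrix.diagonal p + (1 - Matrix.diagonal p) * M)⁻¹ *
            A⁻¹).mulVec (1 : Idx n m → ℝ)) k := by
  intro p hp
  obtain ⟨i0, hi0⟩ := hδpos
  have hn' : 0 < n := by omega
  have hm' : 0 < m := by omega
  haveI : Nonempty (Fin n) := ⟨⟨0, hn'⟩⟩
  haveI : Nonempty (Fin m) := ⟨⟨0, hm'⟩⟩
  haveI : Nonempty (Idx n m) := ⟨(⟨0, hm'⟩, ⟨0, hn'⟩)⟩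
  have hvpos : ∀ k, 0 < v k := by
    intro k; rw [hv]; exact mul_pos (hNpop _) (hvαpos _ _)
  set LD := Lmat Q v + Dmat n m δ with hLD
  -- row sums of LD
  have hDsum : ∀ k : Idx n m, ∑ l, Dmat n m δ k l = δ k.2 := by
    intro k
    simp [Dmat, Matrix.diagonal_apply]
  have hLDsum : ∀ k, ∑ l, LD k l = δ k.2 := by
    intro k
    simp only [hLD, Matrix.add_apply, Finset.sum_add_distrib, Lmat_rowsum_aux, hDsum,
      zero_add]
  -- off-diagonal signs
  have hLoff : ∀ k l : Idx n m, k ≠ l → Lmat Q v k l ≤ 0 := by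
    intro k l hkl
    by_cases h1 : k.1 = l.1
    · have h2 : k.2 ≠ l.2 := fun h2 => hkl (Prod.ext h1 h2)
      have hnn : 0 ≤ Q k.1 l.2 k.2 * v (k.1, l.2) / v k :=
        div_nonneg (mul_nonneg ((hQgen k.1).1 l.2 k.2 (Ne.symm h2)) (hvpos _).le)
          (hvpos k).le
      simp only [Lmat, if_pos h1, if_neg h2]
      linarith
    · simp [Lmat, h1]
  have hLDoff : ∀ k l, k ≠ l → LD k l ≤ 0 := by
    intro k l hkl
    have hD : Dmat n m δ k l = 0 := by
      simp [Dmat, Matrix.diagonal_apply_ne _ hkl]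
    simp only [hLD, Matrix.add_apply, hD, add_zero]
    exact hLoff k l hkl
  have hLedge : ∀ (α : Fin m) (i j : Fin n), i ≠ j → 0 < Q α j i →
      LD (α, i) (α, j) < 0 := by
    intro α i j hij hQ
    have hne : ((α, i) : Idx n m) ≠ (α, j) := by
      simp [Prod.ext_iff, hij]
    have hD : Dmat n m δ (α, i) (α, j) = 0 := by
      simp [Dmat, Matrix.diagonal_apply_ne _ hne]
    have hL : Lmat Q v (α, i) (α, j) = -(Q α j i * v (α, j) / v (α, i)) := by
      simp [Lmat, hij]
    have hpos : 0 < Q α j i * v (α, j) / v (α, i) :=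
      div_pos (mul_pos hQ (hvpos _)) (hvpos _)
    simp only [hLD, Matrix.add_apply, hD, add_zero, hL]
    linarith
  -- reachability infrastructure
  have hrev : ∀ (α : Fin m) (i : Fin n),
      Relation.ReflTransGen (fun a b : Fin n => a ≠ b ∧ 0 < Q α b a) i i0 := by
    intro α i
    have h := Relation.reflTransGen_swap.mpr (hQirr α i0 i)
    exact Relation.ReflTransGen.mono
      (fun a b (hab : Function.swap (fun a b : Fin n => a ≠ b ∧ 0 < Q α a b) a b) =>
        ⟨Ne.symm hab.1, hab.2⟩) _ _ h
  have hreachgen : ∀ K : Matrix (Idx n m) (Idx n m) ℝ,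
      (∀ (α : Fin m) (i j : Fin n), i ≠ j → 0 < Q α j i → K (α, i) (α, j) < 0) →
      (∀ α : Fin m, 0 < ∑ l, K (α, i0) l) →
      ∀ k : Idx n m, ∃ j, Relation.ReflTransGen
        (fun a b : Idx n m => a ≠ b ∧ K a b < 0) k j ∧ 0 < ∑ l, K j l := by
    intro K hedge hrow k
    refine ⟨(k.1, i0), ?_, hrow k.1⟩
    have hlift := Relation.ReflTransGen.lift
      (p := fun a b : Idx n m => a ≠ b ∧ K a b < 0) (fun j => ((k.1, j) : Idx n m))
      (fun a b (hab : a ≠ b ∧ 0 < Q k.1 b a) => ⟨by simp [Prod.ext_iff, hab.1], hedge k.1 a b hab.1 hab.2⟩)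
      _ _ (hrev k.1 k.2)
    exact hlift
  have hdetgen : ∀ K : Matrix (Idx n m) (Idx n m) ℝ,
      (∀ k l, k ≠ l → K k l ≤ 0) → (∀ k, 0 ≤ ∑ l, K k l) →
      (∀ k : Idx n m, ∃ j, Relation.ReflTransGen
        (fun a b : Idx n m => a ≠ b ∧ K a b < 0) k j ∧ 0 < ∑ l, K j l) →
      IsUnit K.det := by
    intro K hZ hRS hre
    rw [isUnit_iff_ne_zero]
    intro h0
    obtain ⟨w0, hw0, hww⟩ := Matrix.exists_mulVec_eq_zero_iff.mpr h0
    apply hw0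
    funext k
    have h1 := zmat_key K hZ hRS hre w0 (by intro l; rw [hww]; exact le_rfl)
    have h2 := zmat_key K hZ hRS hre (-w0)
      (by intro l; rw [Matrix.mulVec_neg, hww]; simp)
    have h2' : w0 k ≤ 0 := by have := h2 k; simpa [neg_nonneg] using this
    exact le_antisymm h2' (h1 k)
  -- invertibility of LD
  have hLDreach := hreachgen LD hLedge (fun α => by rw [hLDsum]; exact hi0)
  have hLDdet : IsUnit LD.det :=
    hdetgen LD hLDoff (fun k => by rw [hLDsum]; exact hδ k.2) hLDreach
  -- the inverse of B
  set Binv : Matrix (Idx n m) (Idx n m) ℝ :=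
    Matrix.diagonal (fun k : Idx n m => (β k.2)⁻¹) with hBinvdef
  have hBinvB : Binv * Bmat n m β = 1 := by
    rw [hBinvdef, Bmat, Matrix.diagonal_mul_diagonal]
    have h5 : (fun i : Idx n m => (β i.2)⁻¹ * β i.2) = fun _ : Idx n m => (1:ℝ) :=
      funext fun k => inv_mul_cancel₀ (hβ k.2).ne'
    rw [h5]
    exact Matrix.diagonal_one
  have hAinv : A⁻¹ = Binv * LD := by
    rw [hA, Matrix.mul_inv_rev, Matrix.nonsing_inv_nonsing_inv _ hLDdet,
      Matrix.inv_eq_left_inv hBinvB]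
  -- Fmat facts
  have hFnn : ∀ k l, 0 ≤ Fmat v k l := by
    intro k l
    simp only [Fmat]
    split
    · exact div_nonneg (hvpos _).le
        (Finset.sum_pos (fun η _ => hvpos _) Finset.univ_nonempty).le
    · exact le_rfl
  have hFrs : ∀ k, ∑ l, Fmat v k l = 1 := Fmat_rowsum_aux v hvpos
  -- the matrix T
  set T := A⁻¹ + Matrix.diagonal p + (1 - Matrix.diagonal p) * M with hTdef
  have h1p : (1 : Matrix (Idx n m) (Idx n m) ℝ) - Matrix.diagonal p
      = Matrix.diagonal (fun k => 1 - p k) := by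
    rw [← Matrix.diagonal_one, Matrix.diagonal_sub]
  have hM1 : ∀ k l : Idx n m, M k l = (if k = l then 1 else 0) - Fmat v k l := by
    intro k l
    rw [hM]
    simp [Matrix.sub_apply, Matrix.one_apply]
  have hTentry : ∀ k l, T k l = (β k.2)⁻¹ * LD k l + (if k = l then p k else 0)
      + (1 - p k) * ((if k = l then 1 else 0) - Fmat v k l) := by
    intro k l
    rw [hTdef]
    rw [Matrix.add_apply, Matrix.add_apply, hAinv, hBinvdef, Matrix.diagonal_mul,
      h1p, Matrix.diagonal_mul, Matrix.diagonal_apply, hM1]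
  have hT_off : ∀ k l, k ≠ l → T k l ≤ 0 := by
    intro k l hkl
    rw [hTentry, if_neg hkl, if_neg hkl]
    have h1 : (β k.2)⁻¹ * LD k l ≤ 0 :=
      mul_nonpos_of_nonneg_of_nonpos (inv_nonneg.mpr (hβ k.2).le) (hLDoff k l hkl)
    have h2 : (1 - p k) * ((0:ℝ) - Fmat v k l) ≤ 0 :=
      mul_nonpos_of_nonneg_of_nonpos (by linarith [(hp k).2]) (by linarith [hFnn k l])
    linarith
  have hT_rs : ∀ k, ∑ l, T k l = δ k.2 / β k.2 + p k := by
    intro k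
    rw [Finset.sum_congr rfl (fun l _ => hTentry k l)]
    rw [Finset.sum_add_distrib, Finset.sum_add_distrib]
    have e1 : ∑ l, (β k.2)⁻¹ * LD k l = δ k.2 / β k.2 := by
      rw [← Finset.mul_sum, hLDsum]
      ring
    have e2 : ∑ l : Idx n m, (if k = l then p k else 0) = p k := by simp
    have e3 : ∑ l, (1 - p k) * ((if k = l then (1:ℝ) else 0) - Fmat v k l) = 0 := by
      rw [← Finset.mul_sum, Finset.sum_sub_distrib]
      have h4 : ∑ l : Idx n m, (if k = l then (1:ℝ) else 0) = 1 := by simp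
      rw [h4, hFrs, sub_self, mul_zero]
    rw [e1, e2, e3, add_zero]
  have hT_edge : ∀ (α : Fin m) (i j : Fin n), i ≠ j → 0 < Q α j i →
      T (α, i) (α, j) < 0 := by
    intro α i j hij hQ
    have hne : ((α, i) : Idx n m) ≠ (α, j) := by
      simp [Prod.ext_iff, hij]
    have hF0 : Fmat v (α, i) (α, j) = 0 := by
      simp [Fmat, Ne.symm hij]
    have h1 : (β i)⁻¹ * LD (α, i) (α, j) < 0 :=
      mul_neg_of_pos_of_neg (inv_pos.mpr (hβ i)) (hLedge α i j hij hQ)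
    rw [hTentry, if_neg hne, if_neg hne, hF0]
    simp only [sub_zero, mul_zero, add_zero, sub_self]
    simpa using h1
  have hT_rs_nn : ∀ k, 0 ≤ ∑ l, T k l := by
    intro k
    rw [hT_rs]
    have h1 : 0 ≤ δ k.2 / β k.2 := div_nonneg (hδ k.2) (hβ k.2).le
    linarith [(hp k).1]
  have hTreach := hreachgen T hT_edge (fun α => by
    rw [hT_rs]
    have h1 : 0 < δ i0 / β i0 := div_pos hi0 (hβ i0)
    have h2 := (hp (α, i0)).1
    dsimp only
    linarith)
  have hTdet : IsUnit T.det := hdetgen T hT_off hT_rs_nn hTreach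
  -- mulVec computations
  have hmv1 : ∀ (N : Matrix (Idx n m) (Idx n m) ℝ) (k : Idx n m),
      N.mulVec (1 : Idx n m → ℝ) k = ∑ l, N k l := by
    intro N k
    simp [Matrix.mulVec, dotProduct]
  have hu : A⁻¹.mulVec (1 : Idx n m → ℝ) = fun k => δ k.2 / β k.2 := by
    rw [hAinv, ← Matrix.mulVec_mulVec]
    funext k
    rw [hBinvdef, Matrix.mulVec_diagonal, hmv1, hLDsum, inv_mul_eq_div]
  have hT1 : T.mulVec (1 : Idx n m → ℝ) = fun k => δ k.2 / β k.2 + p k := by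
    funext k
    rw [hmv1, hT_rs]
  have hTinv1 : T⁻¹.mulVec (A⁻¹.mulVec (1 : Idx n m → ℝ) + p) = 1 := by
    have he : A⁻¹.mulVec (1 : Idx n m → ℝ) + p = T.mulVec 1 := by
      rw [hu, hT1]
      funext k
      simp
    rw [he, Matrix.mulVec_mulVec, Matrix.nonsing_inv_mul _ hTdet, Matrix.one_mulVec]
  set w : Idx n m → ℝ := T⁻¹.mulVec (A⁻¹.mulVec (1 : Idx n m → ℝ)) with hwdef
  have hTw : T.mulVec w = A⁻¹.mulVec (1 : Idx n m → ℝ) := by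
    rw [hwdef, Matrix.mulVec_mulVec, Matrix.mul_nonsing_inv _ hTdet, Matrix.one_mulVec]
  have hwnn : ∀ k, 0 ≤ w k := by
    refine zmat_key T hT_off hT_rs_nn hTreach w ?_
    intro k
    rw [hTw, hu]
    exact div_nonneg (hδ k.2) (hβ k.2).le
  -- the two vectors in the statement
  have h1M : (1 : Matrix (Idx n m) (Idx n m) ℝ) - M = Fmat v := by
    rw [hM, sub_sub_cancel]
  have ha : ((1 - M) * T⁻¹).mulVec p = (Fmat v).mulVec (T⁻¹.mulVec p) := by
    rw [h1M, Matrix.mulVec_mulVec]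
  have hb : (Fmat v * T⁻¹ * A⁻¹).mulVec (1 : Idx n m → ℝ) = (Fmat v).mulVec w := by
    rw [hwdef, Matrix.mulVec_mulVec, Matrix.mulVec_mulVec]
  have hFsum1 : (Fmat v).mulVec (1 : Idx n m → ℝ) = 1 := by
    funext k
    rw [hmv1, hFrs]
    rfl
  have hsum : (Fmat v).mulVec (T⁻¹.mulVec p) + (Fmat v).mulVec w = 1 := by
    have he : T⁻¹.mulVec p + w = (1 : Idx n m → ℝ) := by
      rw [hwdef, ← Matrix.mulVec_add]
      rw [show p + A⁻¹.mulVec (1 : Idx n m → ℝ)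
          = A⁻¹.mulVec (1 : Idx n m → ℝ) + p from add_comm _ _]
      exact hTinv1
    rw [← Matrix.mulVec_add, he, hFsum1]
  refine ⟨hTdet, ?_, ?_⟩
  · rw [ha, hb, ← Matrix.diagonal_one, Matrix.diagonal_sub]
    have hd : (fun i : Idx n m => 1 - ((Fmat v).mulVec (T⁻¹.mulVec p)) i)
        = (Fmat v).mulVec w := by
      funext k
      have hk := congrFun hsum k
      simp only [Pi.add_apply, Pi.one_apply] at hk
      linarith
    rw [hd]
  · intro k
    rw [hb]
    have hent : (Fmat v).mulVec w k = ∑ l, Fmat v k l * w l := by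
      simp [Matrix.mulVec, dotProduct]
    rw [hent]
    exact Finset.sum_nonneg fun l _ => mul_nonneg (hFnn k l) (hwnn l)
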